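/- arXiv:1101.4693 — 4 statements merged into one kernel-verified Lean document; each statement's English description precedes it below -/
import Mathlib

section
/- For a rational map f = (f₁, f₂) : ℂ → (ℂ*)², the Jacobian determinant J(z) = (i/4)((f₁'/f₁)(conj(f₂'/f₂)) − conj(f₁'/f₁)(f₂'/f₂)) of Log∘f, viewed as a function of z and z̄, has only simple poles: near any point a ∈ ℂ which is a zero or pole of f₁ or f₂, |J(z)| ≤ C/|z−a| for some constant C. -/
open Complex

/-- The Jacobian determinant of `Log ∘ (f₁, f₂)`. -/
noncomputable def Jac (f₁ f₂ : ℂ → ℂ) (z : ℂ) : ℂ :=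
  (Complex.I / 4) *
    ((deriv f₁ z / f₁ z) * (starRingEnd ℂ) (deriv f₂ z / f₂ z)
      - (starRingEnd ℂ) (deriv f₁ z / f₁ z) * (deriv f₂ z / f₂ z))

open Polynomial in

lemma poly_logderiv (p : Polynomial ℂ) (hp : p ≠ 0) (a : ℂ) :
    ∃ (n : ℕ) (u : Polynomial ℂ), u.eval a ≠ 0 ∧
      ∀ z : ℂ, z ≠ a → u.eval z ≠ 0 →
        p.eval z ≠ 0 ∧
        p.derivative.eval z / p.eval z =
          (n : ℂ) / (z - a) + u.derivative.eval z / u.eval z := by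
  obtain ⟨u, hu, hnd⟩ := p.exists_eq_pow_rootMultiplicity_mul_and_not_dvd hp a
  rw [show p.rootMultiplicity a = p.rootMultiplicity a from rfl] at hu
  generalize hN : p.rootMultiplicity a = n at hu
  refine ⟨n, u, fun h => hnd (Polynomial.dvd_iff_isRoot.mpr h), ?_⟩
  intro z hz huz
  have hza : z - a ≠ 0 := sub_ne_zero.mpr hz
  have hev : p.eval z = (z - a) ^ n * u.eval z := by
    rw [hu]; simp
  have hpz : p.eval z ≠ 0 := by
    rw [hev]; exact mul_ne_zero (pow_ne_zero _ hza) huz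
  refine ⟨hpz, ?_⟩
  have hde : p.derivative.eval z =
      (n : ℂ) * (z - a) ^ (n - 1) * u.eval z + (z - a) ^ n * u.derivative.eval z := by
    rw [hu, Polynomial.derivative_mul, Polynomial.derivative_pow,
      Polynomial.derivative_X_sub_C]
    simp
  rw [hde, hev]
  rcases n with _ | k
  · simp
  · have hpk : (z - a) ^ k ≠ 0 := pow_ne_zero _ hza
    have : (z - a) ^ (k + 1) = (z - a) ^ k * (z - a) := pow_succ _ _
    rw [Nat.add_sub_cancel, this]
    field_simp

lemma logderiv_decomp (p q : Polynomial ℂ) (hp : p ≠ 0) (hq : q ≠ 0)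
    (f : ℂ → ℂ) (hf : ∀ z, f z = p.eval z / q.eval z) (a : ℂ) :
    ∃ (n : ℝ) (M r : ℝ), 0 < r ∧ 0 ≤ M ∧ ∀ z : ℂ, z ≠ a → ‖z - a‖ < r →
      ‖deriv f z / f z - (n : ℂ) / (z - a)‖ ≤ M := by
  have hfe : f = fun z => p.eval z / q.eval z := funext hf
  subst hfe
  obtain ⟨np, u, hua, hu⟩ := poly_logderiv p hp a
  obtain ⟨nq, v, hva, hv⟩ := poly_logderiv q hq a
  set F : ℂ → ℂ := fun z =>
    u.derivative.eval z / u.eval z - v.derivative.eval z / v.eval z with hF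
  have hFc : ContinuousAt F a := by
    apply ContinuousAt.sub
    · exact ContinuousAt.div (u.derivative.continuous_aeval).continuousAt
        (u.continuous_aeval).continuousAt hua
    · exact ContinuousAt.div (v.derivative.continuous_aeval).continuousAt
        (v.continuous_aeval).continuousAt hva
  obtain ⟨r₁, hr₁, hFr₁⟩ := Metric.continuousAt_iff.mp hFc 1 one_pos
  have hne : ∀ᶠ z in nhds a, u.eval z ≠ 0 ∧ v.eval z ≠ 0 := by
    filter_upwards [(u.continuous_aeval).continuousAt.eventually_ne hua,
      (v.continuous_aeval).continuousAt.eventually_ne hva] with z h1 h2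
    exact ⟨h1, h2⟩
  obtain ⟨r₂, hr₂, hball⟩ := Metric.eventually_nhds_iff.mp hne
  refine ⟨(np : ℝ) - nq, ‖F a‖ + 1, min r₁ r₂, lt_min hr₁ hr₂,
    by positivity, ?_⟩
  intro z hz hzr
  have hdz : dist z a < min r₁ r₂ := by rwa [Complex.dist_eq]
  obtain ⟨huz, hvz⟩ := hball (lt_of_lt_of_le hdz (min_le_right _ _))
  obtain ⟨hpz, hlp⟩ := hu z hz huz
  obtain ⟨hqz, hlq⟩ := hv z hz hvz
  have hfz : q.eval z ≠ 0 := hqz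
  have hd : HasDerivAt (fun z => p.eval z / q.eval z)
      ((p.derivative.eval z * q.eval z - p.eval z * q.derivative.eval z) / (q.eval z) ^ 2) z :=
    (p.hasDerivAt z).div (q.hasDerivAt z) hqz
  have key : deriv (fun z => p.eval z / q.eval z) z / ((fun z => p.eval z / q.eval z) z)
      = p.derivative.eval z / p.eval z - q.derivative.eval z / q.eval z := by
    rw [hd.deriv]
    field_simp
  rw [key, hlp, hlq]
  have hza : z - a ≠ 0 := sub_ne_zero.mpr hz
  have hrw : (np : ℂ) / (z - a) + u.derivative.eval z / u.eval z -
      ((nq : ℂ) / (z - a) + v.derivative.eval z / v.eval z) -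
      (((np : ℝ) - nq : ℝ) : ℂ) / (z - a) = F z := by
    show _ = _ / _ - _ / _
    push_cast
    field_simp
    ring
  rw [hrw]
  have := hFr₁ (lt_of_lt_of_le hdz (min_le_left _ _))
  rw [Complex.dist_eq] at this
  calc ‖F z‖ = ‖F z - F a + F a‖ := by ring_nf
    _ ≤ ‖F z - F a‖ + ‖F a‖ := norm_add_le _ _
    _ ≤ ‖F a‖ + 1 := by linarith

/-- the Jacobian determinant of `Log ∘ f` has only simple poles: near any
zero or pole `a` of `f₁·f₂`, `|J(z)| ≤ C/|z−a|`. -/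
theorem stmt1 (p₁ q₁ p₂ q₂ : Polynomial ℂ)
    (hp₁ : p₁ ≠ 0) (hq₁ : q₁ ≠ 0) (hp₂ : p₂ ≠ 0) (hq₂ : q₂ ≠ 0)
    (f₁ f₂ : ℂ → ℂ)
    (hf₁ : ∀ z, f₁ z = p₁.eval z / q₁.eval z)
    (hf₂ : ∀ z, f₂ z = p₂.eval z / q₂.eval z)
    (a : ℂ) (ha : (p₁ * p₂ * q₁ * q₂).IsRoot a) :
    ∃ C > (0 : ℝ), ∃ r > (0 : ℝ), ∀ z : ℂ,
      0 < ‖z - a‖ → ‖z - a‖ < r →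
        ‖Jac f₁ f₂ z‖ ≤ C / ‖z - a‖ := by
  obtain ⟨n₁, M₁, r₁, hr₁, hM₁, hb₁⟩ := logderiv_decomp p₁ q₁ hp₁ hq₁ f₁ hf₁ a
  obtain ⟨n₂, M₂, r₂, hr₂, hM₂, hb₂⟩ := logderiv_decomp p₂ q₂ hp₂ hq₂ f₂ hf₂ a
  refine ⟨(|n₁| * M₂ + |n₂| * M₁) / 2 + M₁ * M₂ / 2 + 1, by positivity,
    min (min r₁ r₂) 1, by positivity, ?_⟩
  intro z hz0 hzr
  have hz : z ≠ a := by
    intro h; rw [h] at hz0; simp at hz0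
  have hza : z - a ≠ 0 := sub_ne_zero.mpr hz
  have hzr₁ : ‖z - a‖ < r₁ :=
    lt_of_lt_of_le hzr (le_trans (min_le_left _ _) (min_le_left _ _))
  have hzr₂ : ‖z - a‖ < r₂ :=
    lt_of_lt_of_le hzr (le_trans (min_le_left _ _) (min_le_right _ _))
  have hA1 : ‖z - a‖ < 1 := lt_of_lt_of_le hzr (min_le_right _ _)
  set A := ‖z - a‖ with hAdef
  have hA : 0 < A := hz0
  set h₁ := deriv f₁ z / f₁ z - (n₁ : ℂ) / (z - a) with hh₁
  set h₂ := deriv f₂ z / f₂ z - (n₂ : ℂ) / (z - a) with hh₂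
  have hb1 : ‖h₁‖ ≤ M₁ := by exact hb₁ z hz hzr₁
  have hb2 : ‖h₂‖ ≤ M₂ := by exact hb₂ z hz hzr₂
  have e₁ : deriv f₁ z / f₁ z = (n₁ : ℂ) / (z - a) + h₁ := by rw [hh₁]; ring
  have e₂ : deriv f₂ z / f₂ z = (n₂ : ℂ) / (z - a) + h₂ := by rw [hh₂]; ring
  have hcw : (starRingEnd ℂ) (z - a) ≠ 0 := by
    rw [← map_zero (starRingEnd ℂ)]
    exact fun h => hza ((starRingEnd ℂ).injective h)
  have key : Jac f₁ f₂ z = (Complex.I / 4) *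
      (((n₁ : ℂ) * (starRingEnd ℂ) h₂ - (n₂ : ℂ) * (starRingEnd ℂ) h₁) / (z - a)
        + ((n₂ : ℂ) * h₁ - (n₁ : ℂ) * h₂) / (starRingEnd ℂ) (z - a)
        + (h₁ * (starRingEnd ℂ) h₂ - (starRingEnd ℂ) h₁ * h₂)) := by
    rw [Jac, e₁, e₂]
    simp only [map_add, map_div₀, Complex.conj_ofReal]
    field_simp
    ring
  have nb1 : ‖(n₁ : ℂ) * (starRingEnd ℂ) h₂ - (n₂ : ℂ) * (starRingEnd ℂ) h₁‖
      ≤ |n₁| * M₂ + |n₂| * M₁ := by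
    calc ‖(n₁ : ℂ) * (starRingEnd ℂ) h₂ - (n₂ : ℂ) * (starRingEnd ℂ) h₁‖
        ≤ ‖(n₁ : ℂ) * (starRingEnd ℂ) h₂‖ + ‖(n₂ : ℂ) * (starRingEnd ℂ) h₁‖ :=
          norm_sub_le _ _
      _ = |n₁| * ‖h₂‖ + |n₂| * ‖h₁‖ := by
          simp [norm_mul, Complex.norm_real, Real.norm_eq_abs, RCLike.norm_conj]
      _ ≤ |n₁| * M₂ + |n₂| * M₁ := by gcongr <;> exact abs_nonneg _
  have nb2 : ‖(n₂ : ℂ) * h₁ - (n₁ : ℂ) * h₂‖ ≤ |n₂| * M₁ + |n₁| * M₂ := by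
    calc ‖(n₂ : ℂ) * h₁ - (n₁ : ℂ) * h₂‖
        ≤ ‖(n₂ : ℂ) * h₁‖ + ‖(n₁ : ℂ) * h₂‖ := norm_sub_le _ _
      _ = |n₂| * ‖h₁‖ + |n₁| * ‖h₂‖ := by
          simp [norm_mul, Complex.norm_real, Real.norm_eq_abs]
      _ ≤ |n₂| * M₁ + |n₁| * M₂ := by gcongr <;> exact abs_nonneg _
  have nb3 : ‖h₁ * (starRingEnd ℂ) h₂ - (starRingEnd ℂ) h₁ * h₂‖ ≤ 2 * (M₁ * M₂) := by
    calc ‖h₁ * (starRingEnd ℂ) h₂ - (starRingEnd ℂ) h₁ * h₂‖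
        ≤ ‖h₁ * (starRingEnd ℂ) h₂‖ + ‖(starRingEnd ℂ) h₁ * h₂‖ := norm_sub_le _ _
      _ = ‖h₁‖ * ‖h₂‖ + ‖h₁‖ * ‖h₂‖ := by
          simp [norm_mul, RCLike.norm_conj]
      _ ≤ 2 * (M₁ * M₂) := by
          nlinarith [norm_nonneg h₁, norm_nonneg h₂]
  have hJ : ‖Jac f₁ f₂ z‖ ≤
      (1 / 4) * ((|n₁| * M₂ + |n₂| * M₁) / A + (|n₂| * M₁ + |n₁| * M₂) / A
        + 2 * (M₁ * M₂)) := by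
    rw [key, norm_mul]
    have h14 : ‖Complex.I / (4 : ℂ)‖ = 1 / 4 := by
      simp [norm_div, Complex.norm_I]
    rw [h14]
    gcongr
    calc ‖_ + _ + _‖ ≤ ‖((n₁ : ℂ) * (starRingEnd ℂ) h₂ - (n₂ : ℂ) * (starRingEnd ℂ) h₁) / (z - a)‖
          + ‖((n₂ : ℂ) * h₁ - (n₁ : ℂ) * h₂) / (starRingEnd ℂ) (z - a)‖
          + ‖h₁ * (starRingEnd ℂ) h₂ - (starRingEnd ℂ) h₁ * h₂‖ := norm_add₃_le
      _ ≤ (|n₁| * M₂ + |n₂| * M₁) / A + (|n₂| * M₁ + |n₁| * M₂) / A + 2 * (M₁ * M₂) := by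
          rw [norm_div, norm_div, RCLike.norm_conj,
            show ‖z - a‖ = A from rfl]
          gcongr
  refine le_trans hJ ?_
  have e : (1 : ℝ) / 4 * ((|n₁| * M₂ + |n₂| * M₁) / A + (|n₂| * M₁ + |n₁| * M₂) / A
      + 2 * (M₁ * M₂)) =
      (1 / 4 * ((|n₁| * M₂ + |n₂| * M₁) + (|n₂| * M₁ + |n₁| * M₂) + 2 * (M₁ * M₂) * A)) / A := by
    field_simp
  rw [e]
  gcongr
  nlinarith [mul_nonneg (mul_nonneg hM₁ hM₂) (sub_nonneg.mpr hA1.le)]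
end

section
/- For nonzero rational functions f₁, f₂ on ℂ, the Jacobian determinant J(z) of Log∘(f₁,f₂) decays at infinity at least like |z|^{-3}: there exist C > 0 and R > 0 such that |J(z)| ≤ C·|z|^{-3} for all |z| > R. -/
section Helpers
open Complex Polynomial

noncomputable abbrev Complex.abs : AbsoluteValue ℂ ℝ := IsAbsoluteValue.toAbsoluteValue (norm : ℂ → ℝ)

lemma Complex.abs_conj (z : ℂ) : Complex.abs ((starRingEnd ℂ) z) = Complex.abs z := Complex.norm_conj z

lemma Complex.abs_I : Complex.abs Complex.I = 1 := Complex.norm_I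

lemma Complex.abs_ofNat (n : ℕ) [n.AtLeastTwo] :
    Complex.abs (OfNat.ofNat n : ℂ) = (OfNat.ofNat n : ℝ) := Complex.norm_ofNat n

lemma poly_upper (p : Polynomial ℂ) (k : ℕ) (h : p.degree ≤ k) :
    ∃ C > (0:ℝ), ∀ z : ℂ, 1 ≤ Complex.abs z →
      Complex.abs (p.eval z) ≤ C * Complex.abs z ^ k := by
  refine ⟨(∑ i ∈ Finset.range (k+1), Complex.abs (p.coeff i)) + 1, by positivity, fun z hz => ?_⟩
  have hnd : p.natDegree < k + 1 := Nat.lt_succ_of_le (natDegree_le_iff_degree_le.2 h)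
  rw [Polynomial.eval_eq_sum_range' hnd]
  calc Complex.abs (∑ i ∈ Finset.range (k+1), p.coeff i * z ^ i)
      ≤ ∑ i ∈ Finset.range (k+1), Complex.abs (p.coeff i * z ^ i) := by
        exact (Complex.abs.sum_le _ _)
    _ ≤ ∑ i ∈ Finset.range (k+1), Complex.abs (p.coeff i) * Complex.abs z ^ k := by
        apply Finset.sum_le_sum
        intro i hi
        rw [map_mul, map_pow]
        exact mul_le_mul_of_nonneg_left
          (pow_le_pow_right₀ hz (Nat.le_of_lt_succ (Finset.mem_range.1 hi)))
          (Complex.abs.nonneg _)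
    _ = (∑ i ∈ Finset.range (k+1), Complex.abs (p.coeff i)) * Complex.abs z ^ k := by
        rw [Finset.sum_mul]
    _ ≤ _ := by
        have : (0:ℝ) ≤ Complex.abs z ^ k := by positivity
        nlinarith

lemma poly_lower (p : Polynomial ℂ) (hp : p ≠ 0) :
    ∃ c > (0:ℝ), ∃ R ≥ (1:ℝ), ∀ z : ℂ, R < Complex.abs z →
      c * Complex.abs z ^ p.natDegree ≤ Complex.abs (p.eval z) := by
  set n := p.natDegree with hn
  set r : Polynomial ℂ := p - Polynomial.C p.leadingCoeff * Polynomial.X ^ n with hr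
  have hlead : Complex.abs p.leadingCoeff > 0 := by
    simpa [Complex.abs.pos_iff] using Polynomial.leadingCoeff_ne_zero.2 hp
  rcases Nat.eq_zero_or_pos n with h0 | hpos
  · refine ⟨Complex.abs p.leadingCoeff, hlead, 1, le_refl _, fun z hz => ?_⟩
    conv_rhs => rw [Polynomial.eq_C_of_natDegree_eq_zero h0]
    rw [Polynomial.eval_C, h0, pow_zero, mul_one, Polynomial.leadingCoeff, ← hn, h0]
  · have hrd : r.degree ≤ ((n - 1 : ℕ) : WithBot ℕ) := by
      apply Polynomial.degree_le_iff_coeff_zero _ _ |>.2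
      intro m hm
      have hm' : n ≤ m := by
        by_contra hcon
        push_neg at hcon
        have : (m : WithBot ℕ) ≤ ((n-1 : ℕ) : WithBot ℕ) := by
          exact_mod_cast Nat.le_sub_one_of_lt hcon
        exact absurd hm (not_lt.2 this)
      rw [Polynomial.coeff_sub, Polynomial.coeff_C_mul, Polynomial.coeff_X_pow]
      rcases eq_or_lt_of_le hm' with h | h
      · rw [← h, if_pos rfl, mul_one, Polynomial.leadingCoeff, ← hn, sub_self]
      · rw [Polynomial.coeff_eq_zero_of_natDegree_lt (hn ▸ h), if_neg (by omega)]
        simp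
    obtain ⟨Cr, hCr, hCrb⟩ := poly_upper r (n-1) hrd
    refine ⟨Complex.abs p.leadingCoeff / 2, by positivity,
      max 1 (2 * Cr / Complex.abs p.leadingCoeff), le_max_left _ _, fun z hz => ?_⟩
    have hz1 : (1:ℝ) ≤ Complex.abs z := le_of_lt (lt_of_le_of_lt (le_max_left _ _) hz)
    have hz2 : 2 * Cr / Complex.abs p.leadingCoeff < Complex.abs z :=
      lt_of_le_of_lt (le_max_right _ _) hz
    have hzpos : (0:ℝ) < Complex.abs z := lt_of_lt_of_le one_pos hz1
    have hev : p.eval z = p.leadingCoeff * z ^ n + r.eval z := by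
      simp only [hr, Polynomial.eval_sub, Polynomial.eval_mul, Polynomial.eval_C,
        Polynomial.eval_pow, Polynomial.eval_X]; ring
    have h1 : Complex.abs (r.eval z) ≤ Cr * Complex.abs z ^ (n-1) := hCrb z hz1
    have key : Cr * Complex.abs z ^ (n-1) ≤ (Complex.abs p.leadingCoeff / 2) * Complex.abs z ^ n := by
      have hpow : Complex.abs z ^ n = Complex.abs z ^ (n-1) * Complex.abs z := by
        rw [← pow_succ]; congr 1; omega
      rw [hpow]
      rw [div_lt_iff₀ hlead] at hz2
      have hpw : (0:ℝ) < Complex.abs z ^ (n-1) := by positivity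
      nlinarith
    calc Complex.abs p.leadingCoeff / 2 * Complex.abs z ^ n
        = Complex.abs p.leadingCoeff * Complex.abs z ^ n - Complex.abs p.leadingCoeff / 2 * Complex.abs z ^ n := by ring
      _ ≤ Complex.abs (p.leadingCoeff * z ^ n) - Complex.abs (r.eval z) := by
          rw [map_mul, map_pow]
          have := le_trans h1 key
          linarith
      _ ≤ Complex.abs (p.leadingCoeff * z ^ n + r.eval z) := by
          have h := Complex.abs.add_le (p.leadingCoeff * z ^ n + r.eval z) (- r.eval z)
          simp only [add_neg_cancel_right, map_neg, Complex.abs.map_neg] at h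
          linarith
      _ = Complex.abs (p.eval z) := by rw [hev]

lemma logderiv_approx (p : Polynomial ℂ) (hp : p ≠ 0) :
    ∃ C > (0:ℝ), ∃ R ≥ (1:ℝ), ∀ z : ℂ, R < Complex.abs z →
      p.eval z ≠ 0 ∧
      Complex.abs (p.derivative.eval z / p.eval z - (p.natDegree : ℂ) / z)
        ≤ C / Complex.abs z ^ 2 := by
  set n := p.natDegree with hn
  set r : Polynomial ℂ := Polynomial.X * p.derivative - Polynomial.C (n : ℂ) * p with hr
  have hrd : r.degree ≤ ((n - 1 : ℕ) : WithBot ℕ) := by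
    apply Polynomial.degree_le_iff_coeff_zero _ _ |>.2
    intro m hm
    have hm' : n ≤ m := by
      by_contra hcon
      push_neg at hcon
      have : (m : WithBot ℕ) ≤ ((n-1 : ℕ) : WithBot ℕ) := by
        exact_mod_cast Nat.le_sub_one_of_lt hcon
      exact absurd hm (not_lt.2 this)
    rw [hr, Polynomial.coeff_sub, Polynomial.coeff_C_mul]
    rcases Nat.eq_zero_or_pos m with hm0 | hmpos
    · have hn0 : n = 0 := by omega
      simp [hm0, hn0, Polynomial.coeff_X_mul_zero]
    · have : m = (m - 1) + 1 := by omega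
      rw [this, Polynomial.coeff_X_mul, Polynomial.coeff_derivative]
      rcases eq_or_lt_of_le hm' with h | h
      · rw [← this, ← h]
        have hcast : ((n - 1 : ℕ) : ℂ) + 1 = (n : ℂ) := by
          have h1 : 1 ≤ n := by omega
          push_cast [h1]; ring
        rw [hcast]; ring
      · rw [show m - 1 + 1 = m by omega]
        rw [Polynomial.coeff_eq_zero_of_natDegree_lt (hn ▸ h)]
        simp
  obtain ⟨c, hc, R0, hR0, hlow⟩ := poly_lower p hp
  obtain ⟨Cr, hCr, hub⟩ := poly_upper r (n-1) hrd
  refine ⟨Cr / c, by positivity, R0, hR0, fun z hz => ?_⟩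
  have hz1 : (1:ℝ) ≤ Complex.abs z := le_of_lt (lt_of_le_of_lt hR0 hz)
  have hzpos : (0:ℝ) < Complex.abs z := lt_of_lt_of_le one_pos hz1
  have hzne : z ≠ 0 := by
    intro h; rw [h] at hzpos; simp at hzpos
  have hplow : c * Complex.abs z ^ n ≤ Complex.abs (p.eval z) := hlow z hz
  have hppos : (0:ℝ) < Complex.abs (p.eval z) := lt_of_lt_of_le (by positivity) hplow
  have hpne : p.eval z ≠ 0 := by
    intro h; rw [h] at hppos; simp at hppos
  refine ⟨hpne, ?_⟩
  have heq : p.derivative.eval z / p.eval z - (n : ℂ) / z = r.eval z / (z * p.eval z) := by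
    rw [hr]
    simp only [Polynomial.eval_sub, Polynomial.eval_mul, Polynomial.eval_C, Polynomial.eval_X]
    field_simp
  rw [heq, map_div₀, map_mul]
  have hrub : Complex.abs (r.eval z) ≤ Cr * Complex.abs z ^ (n-1) := hub z hz1
  rw [div_le_div_iff₀ (by positivity) (by positivity)]
  rcases Nat.eq_zero_or_pos n with hn0 | hnpos
  · have hder : p.derivative = 0 := by
      have hnd : p.natDegree = 0 := by rw [← hn]; exact hn0
      obtain ⟨a, ha⟩ := Polynomial.natDegree_eq_zero.1 hnd
      rw [← ha, Polynomial.derivative_C]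
    have hr0 : r = 0 := by
      rw [hr, hder, hn0]
      simp
    rw [hr0]
    simp only [Polynomial.eval_zero, map_zero, zero_mul]
    positivity
  · calc Complex.abs (r.eval z) * Complex.abs z ^ 2
        ≤ (Cr * Complex.abs z ^ (n-1)) * Complex.abs z ^ 2 := by
          exact mul_le_mul_of_nonneg_right hrub (by positivity)
      _ = Cr * Complex.abs z ^ (n+1) := by
          rw [mul_assoc, ← pow_add]
          congr 2
          omega
      _ = (Cr / c) * (c * Complex.abs z ^ n * Complex.abs z) := by
          field_simp
          ring
      _ ≤ (Cr / c) * (Complex.abs z * Complex.abs (p.eval z)) := by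
          apply mul_le_mul_of_nonneg_left _ (by positivity)
          nlinarith

lemma ratlog (p q : Polynomial ℂ) (hp : p ≠ 0) (hq : q ≠ 0) (f : ℂ → ℂ)
    (hf : ∀ z, f z = p.eval z / q.eval z) :
    ∃ C > (0:ℝ), ∃ R ≥ (1:ℝ), ∀ z : ℂ, R < Complex.abs z →
      Complex.abs (deriv f z / f z - ((p.natDegree : ℂ) - (q.natDegree : ℂ)) / z)
        ≤ C / Complex.abs z ^ 2 ∧
      Complex.abs (deriv f z / f z) ≤ C / Complex.abs z := by
  obtain ⟨Cp, hCp, Rp, hRp, hbp⟩ := logderiv_approx p hp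
  obtain ⟨Cq, hCq, Rq, hRq, hbq⟩ := logderiv_approx q hq
  set d : ℂ := (p.natDegree : ℂ) - (q.natDegree : ℂ) with hd
  refine ⟨Cp + Cq + Complex.abs d, by positivity, max Rp Rq,
    le_trans hRp (le_max_left _ _), fun z hz => ?_⟩
  obtain ⟨hpne, hbp'⟩ := hbp z (lt_of_le_of_lt (le_max_left _ _) hz)
  obtain ⟨hqne, hbq'⟩ := hbq z (lt_of_le_of_lt (le_max_right _ _) hz)
  have hz1 : (1:ℝ) ≤ Complex.abs z := le_of_lt (lt_of_le_of_lt (le_trans hRp (le_max_left _ _)) hz)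
  have hzpos : (0:ℝ) < Complex.abs z := lt_of_lt_of_le one_pos hz1
  have hzne : z ≠ 0 := by intro h; rw [h] at hzpos; simp at hzpos
  -- compute deriv f z
  have hfe : f = fun w => p.eval w / q.eval w := funext hf
  have hder : HasDerivAt f ((p.derivative.eval z * q.eval z - p.eval z * q.derivative.eval z)
      / q.eval z ^ 2) z := by
    rw [hfe]
    exact (p.hasDerivAt z).div (q.hasDerivAt z) hqne
  have hdf : deriv f z = (p.derivative.eval z * q.eval z - p.eval z * q.derivative.eval z)
      / q.eval z ^ 2 := hder.deriv
  have hlog : deriv f z / f z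
      = p.derivative.eval z / p.eval z - q.derivative.eval z / q.eval z := by
    rw [hdf, hf z]
    field_simp
  have hsplit : deriv f z / f z - d / z
      = (p.derivative.eval z / p.eval z - (p.natDegree : ℂ) / z)
        - (q.derivative.eval z / q.eval z - (q.natDegree : ℂ) / z) := by
    rw [hlog, hd]; ring
  have hb1 : Complex.abs (deriv f z / f z - d / z) ≤ (Cp + Cq) / Complex.abs z ^ 2 := by
    rw [hsplit]
    calc Complex.abs _ ≤ Complex.abs (p.derivative.eval z / p.eval z - (p.natDegree : ℂ) / z)
          + Complex.abs (q.derivative.eval z / q.eval z - (q.natDegree : ℂ) / z) := by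
          exact Complex.abs.sub_le_add _ _
      _ ≤ Cp / Complex.abs z ^ 2 + Cq / Complex.abs z ^ 2 := add_le_add hbp' hbq'
      _ = (Cp + Cq) / Complex.abs z ^ 2 := by ring
  constructor
  · refine le_trans hb1 ?_
    apply div_le_div_of_nonneg_right ?_ (by positivity)
    linarith [Complex.abs.nonneg d]
  · have : Complex.abs (deriv f z / f z) ≤ Complex.abs d / Complex.abs z
        + (Cp + Cq) / Complex.abs z ^ 2 := by
      have h := Complex.abs.add_le (deriv f z / f z - d / z) (d / z)
      simp only [sub_add_cancel] at h
      calc Complex.abs (deriv f z / f z)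
          ≤ Complex.abs (deriv f z / f z - d / z) + Complex.abs (d / z) := h
        _ ≤ (Cp + Cq) / Complex.abs z ^ 2 + Complex.abs d / Complex.abs z := by
            rw [map_div₀]
            exact add_le_add hb1 (le_refl _)
        _ = _ := by ring
    refine le_trans this ?_
    have h2 : (Cp + Cq) / Complex.abs z ^ 2 ≤ (Cp + Cq) / Complex.abs z := by
      apply div_le_div_of_nonneg_left (by positivity) hzpos
      nlinarith
    calc Complex.abs d / Complex.abs z + (Cp + Cq) / Complex.abs z ^ 2
        ≤ Complex.abs d / Complex.abs z + (Cp + Cq) / Complex.abs z := by linarith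
      _ = (Cp + Cq + Complex.abs d) / Complex.abs z := by ring

end Helpers


open Complex

/-- the Jacobian determinant of `Log ∘ (f₁, f₂)` decays at infinity at
least like `|z|⁻³`. -/
theorem stmt2 (p₁ q₁ p₂ q₂ : Polynomial ℂ)
    (hp₁ : p₁ ≠ 0) (hq₁ : q₁ ≠ 0) (hp₂ : p₂ ≠ 0) (hq₂ : q₂ ≠ 0)
    (f₁ f₂ : ℂ → ℂ)
    (hf₁ : ∀ z, f₁ z = p₁.eval z / q₁.eval z)
    (hf₂ : ∀ z, f₂ z = p₂.eval z / q₂.eval z) :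
    ∃ C > (0 : ℝ), ∃ R > (0 : ℝ), ∀ z : ℂ, R < ‖z‖ →
      ‖Jac f₁ f₂ z‖ ≤ C * ‖z‖ ⁻¹ ^ 3 := by
  show ∃ C > (0 : ℝ), ∃ R > (0 : ℝ), ∀ z : ℂ, R < Complex.abs z →
      Complex.abs (Jac f₁ f₂ z) ≤ C * (Complex.abs z) ⁻¹ ^ 3
  obtain ⟨C₁, hC₁, R₁, hR₁, hb₁⟩ := ratlog p₁ q₁ hp₁ hq₁ f₁ hf₁
  obtain ⟨C₂, hC₂, R₂, hR₂, hb₂⟩ := ratlog p₂ q₂ hp₂ hq₂ f₂ hf₂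
  set d₁ : ℂ := (p₁.natDegree : ℂ) - (q₁.natDegree : ℂ) with hd₁
  set d₂ : ℂ := (p₂.natDegree : ℂ) - (q₂.natDegree : ℂ) with hd₂
  refine ⟨(C₁ * C₂ + Complex.abs d₁ * C₂) / 2 + 1, by positivity,
    max R₁ R₂, lt_of_lt_of_le one_pos (le_trans hR₁ (le_max_left _ _)), fun z hz => ?_⟩
  obtain ⟨hu₁, ha₁⟩ := hb₁ z (lt_of_le_of_lt (le_max_left _ _) hz)
  obtain ⟨hu₂, ha₂⟩ := hb₂ z (lt_of_le_of_lt (le_max_right _ _) hz)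
  have hz1 : (1:ℝ) ≤ Complex.abs z :=
    le_of_lt (lt_of_le_of_lt (le_trans hR₁ (le_max_left _ _)) hz)
  have hzpos : (0:ℝ) < Complex.abs z := lt_of_lt_of_le one_pos hz1
  set a : ℂ := deriv f₁ z / f₁ z
  set b : ℂ := deriv f₂ z / f₂ z
  set u : ℂ := a - d₁ / z with hu
  set v : ℂ := b - d₂ / z with hv
  set w : ℂ := a * (starRingEnd ℂ) b with hw
  set t : ℂ := (d₁ / z) * (starRingEnd ℂ) (d₂ / z) with ht
  have hconjd₁ : (starRingEnd ℂ) d₁ = d₁ := by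
    rw [hd₁]; simp [Complex.conj_natCast]
  have hconjd₂ : (starRingEnd ℂ) d₂ = d₂ := by
    rw [hd₂]; simp [Complex.conj_natCast]
  have hct : (starRingEnd ℂ) t = t := by
    rw [ht]
    simp only [map_mul, map_div₀, RingHomCompTriple.comp_apply, RingHom.id_apply,
      Complex.conj_conj, hconjd₁, hconjd₂]
    ring
  have hJ : Jac f₁ f₂ z = (Complex.I / 4) * ((w - t) - (starRingEnd ℂ) (w - t)) := by
    rw [Jac, hw, map_sub, hct]
    have : (starRingEnd ℂ) (a * (starRingEnd ℂ) b) = (starRingEnd ℂ) a * b := by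
      simp [map_mul]
    rw [this]
    ring
  have hwt : w - t = u * (starRingEnd ℂ) b + (d₁ / z) * (starRingEnd ℂ) v := by
    rw [hw, ht, hu, hv]
    simp only [map_sub, map_div₀, hconjd₂]
    ring
  have habs_wt : Complex.abs (w - t)
      ≤ (C₁ / Complex.abs z ^ 2) * (C₂ / Complex.abs z)
        + (Complex.abs d₁ / Complex.abs z) * (C₂ / Complex.abs z ^ 2) := by
    have hdz : Complex.abs (d₁ / z) = Complex.abs d₁ / Complex.abs z := map_div₀ Complex.abs _ _
    calc Complex.abs (w - t) ≤ Complex.abs u * Complex.abs b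
          + Complex.abs (d₁ / z) * Complex.abs v := by
          rw [hwt]
          refine (Complex.abs.add_le _ _).trans ?_
          rw [map_mul, map_mul, Complex.abs_conj, Complex.abs_conj]
      _ ≤ _ := by
          rw [hdz]
          apply add_le_add
          · exact mul_le_mul hu₁ ha₂ (Complex.abs.nonneg _) (by positivity)
          · exact mul_le_mul_of_nonneg_left hu₂ (by positivity)
  have hJabs : Complex.abs (Jac f₁ f₂ z) ≤ (1/2) * Complex.abs (w - t) := by
    rw [hJ, map_mul, map_div₀, Complex.abs_I, Complex.abs_ofNat]
    have h := Complex.abs.sub_le_add (w - t) ((starRingEnd ℂ) (w - t))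
    rw [Complex.abs_conj] at h
    linarith
  have hfin : (1/2) * Complex.abs (w - t)
      ≤ ((C₁ * C₂ + Complex.abs d₁ * C₂) / 2) / Complex.abs z ^ 3 := by
    calc (1/2) * Complex.abs (w - t)
        ≤ (1/2) * ((C₁ / Complex.abs z ^ 2) * (C₂ / Complex.abs z)
          + (Complex.abs d₁ / Complex.abs z) * (C₂ / Complex.abs z ^ 2)) := by
          linarith [habs_wt]
      _ = ((C₁ * C₂ + Complex.abs d₁ * C₂) / 2) / Complex.abs z ^ 3 := by
          field_simp
  have hcube : (Complex.abs z)⁻¹ ^ 3 = 1 / Complex.abs z ^ 3 := by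
    rw [inv_pow, inv_eq_one_div]
  rw [hcube]
  calc Complex.abs (Jac f₁ f₂ z) ≤ ((C₁ * C₂ + Complex.abs d₁ * C₂) / 2) / Complex.abs z ^ 3 :=
        le_trans hJabs hfin
    _ ≤ ((C₁ * C₂ + Complex.abs d₁ * C₂) / 2 + 1) * (1 / Complex.abs z ^ 3) := by
        rw [mul_one_div]
        apply div_le_div_of_nonneg_right (by linarith) (by positivity)
end

section
/- For nonzero rational functions f₁, f₂ on ℂ, the absolute value of the Jacobian determinant of Log∘(f₁,f₂) is Lebesgue-integrable over ℂ. -/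
open Complex MeasureTheory

section Aux

open Set

lemma int1d : IntegrableOn (fun x : ℝ => |x| ^ (-(1/2) : ℝ)) (Icc (-1) 1) := by
  have h1 : IntegrableOn (fun x : ℝ => x ^ (-(1/2) : ℝ)) (Ioc 0 1) := by
    have := intervalIntegral.intervalIntegrable_rpow' (a := 0) (b := 1) (r := -(1/2)) (by norm_num)
    rwa [intervalIntegrable_iff_integrableOn_Ioc_of_le (by norm_num)] at this
  have h1' : IntegrableOn (fun x : ℝ => |x| ^ (-(1/2) : ℝ)) (Ioc 0 1) := by
    apply h1.congr_fun ?_ measurableSet_Ioc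
    intro x hx; simp [abs_of_pos hx.1]
  have h2 : IntegrableOn (fun x : ℝ => |x| ^ (-(1/2) : ℝ)) (Ico (-1) 0) := by
    have h3 := ((integrable_indicator_iff measurableSet_Ioc).mpr h1').comp_neg (μ := volume)
    have h4 : (fun x : ℝ => ((Ioc (0:ℝ) 1).indicator (fun x : ℝ => |x| ^ (-(1/2) : ℝ)) (-x)))
        = (Ico (-1:ℝ) 0).indicator (fun x : ℝ => |x| ^ (-(1/2) : ℝ)) := by
      ext x
      by_cases hx : x ∈ Ico (-1:ℝ) 0
      · rw [indicator_of_mem hx, indicator_of_mem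
          (by simp only [mem_Ico] at hx; exact ⟨by linarith [hx.2], by linarith [hx.1]⟩)]
        simp [abs_neg]
      · rw [indicator_of_notMem hx, indicator_of_notMem (by
          simp only [mem_Ico, not_and_or, not_le, not_lt] at hx
          simp only [mem_Ioc, not_and_or, not_le, not_lt]
          rcases hx with h | h
          · exact Or.inr (by linarith)
          · exact Or.inl (by linarith))]
    rw [h4] at h3
    rwa [integrable_indicator_iff measurableSet_Ico] at h3
  have h5 : Icc (-1:ℝ) 1 ⊆ (Ico (-1) 0 ∪ Ioc 0 1) ∪ {0} := by
    intro x hx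
    rcases lt_trichotomy x 0 with h | h | h
    · exact Or.inl (Or.inl ⟨hx.1, h⟩)
    · exact Or.inr (by simp [h])
    · exact Or.inl (Or.inr ⟨h, hx.2⟩)
  have h6 : IntegrableOn (fun x : ℝ => |x| ^ (-(1/2) : ℝ)) ({0} : Set ℝ) := by simp
  apply IntegrableOn.mono_set ?_ h5
  exact (h2.union h1').union h6

noncomputable def Fh (x : ℝ) : ℝ := (Icc (-1:ℝ) 1).indicator (fun x => |x| ^ (-(1/2):ℝ)) x

lemma intF : Integrable Fh := (integrable_indicator_iff measurableSet_Icc).mpr int1d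

lemma intProd : Integrable (fun z : ℂ => Fh z.re * Fh z.im) := by
  have h : Integrable (fun p : ℝ × ℝ => Fh p.1 * Fh p.2) := by
    rw [Measure.volume_eq_prod]
    exact intF.mul_prod intF
  have := ((MeasurePreserving.integrable_comp Complex.volume_preserving_equiv_real_prod
    (h.aestronglyMeasurable)).mpr h)
  exact this

lemma null_re : volume {z : ℂ | z.re = 0} = 0 := by
  have : {z : ℂ | z.re = 0} = Complex.measurableEquivRealProd ⁻¹' ({0} ×ˢ univ) := by
    ext z; simp [Complex.measurableEquivRealProd, Complex.equivRealProd, eq_comm]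
  rw [this, Complex.volume_preserving_equiv_real_prod.measure_preimage
    (((MeasurableSet.singleton 0).prod MeasurableSet.univ)).nullMeasurableSet]
  rw [Measure.volume_eq_prod, Measure.prod_prod]
  simp

lemma null_im : volume {z : ℂ | z.im = 0} = 0 := by
  have : {z : ℂ | z.im = 0} = Complex.measurableEquivRealProd ⁻¹' (univ ×ˢ {0}) := by
    ext z; simp [Complex.measurableEquivRealProd, Complex.equivRealProd, eq_comm]
  rw [this, Complex.volume_preserving_equiv_real_prod.measure_preimage
    ((MeasurableSet.univ.prod (MeasurableSet.singleton 0))).nullMeasurableSet]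
  rw [Measure.volume_eq_prod, Measure.prod_prod]
  simp

lemma sqrt_bound {x y : ℝ} (hx : x ≠ 0) (hy : y ≠ 0) :
    (Real.sqrt (x^2+y^2) * (1 + Real.sqrt (x^2+y^2))^2)⁻¹
      ≤ (2:ℝ) ^ (-(1/2):ℝ) * (|x| ^ (-(1/2):ℝ) * |y| ^ (-(1/2):ℝ)) := by
  have hx' : (0:ℝ) < |x| := abs_pos.mpr hx
  have hy' : (0:ℝ) < |y| := abs_pos.mpr hy
  have h2 : ((2:ℝ)) ^ (-(1/2):ℝ) = (Real.sqrt 2)⁻¹ := by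
    rw [Real.rpow_neg (by norm_num), Real.sqrt_eq_rpow]
  have hxr : |x| ^ (-(1/2):ℝ) = (Real.sqrt |x|)⁻¹ := by
    rw [Real.rpow_neg (abs_nonneg x), Real.sqrt_eq_rpow]
  have hyr : |y| ^ (-(1/2):ℝ) = (Real.sqrt |y|)⁻¹ := by
    rw [Real.rpow_neg (abs_nonneg y), Real.sqrt_eq_rpow]
  rw [h2, hxr, hyr, ← mul_inv, ← mul_inv]
  have ha : Real.sqrt 2 * Real.sqrt |x| * Real.sqrt |y| = Real.sqrt (2 * |x| * |y|) := by
    rw [Real.sqrt_mul (by norm_num), Real.sqrt_mul (by positivity)]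
  have hb : Real.sqrt (2 * |x| * |y|) ≤ Real.sqrt (x^2+y^2) := by
    apply Real.sqrt_le_sqrt
    nlinarith [sq_nonneg (|x| - |y|), _root_.sq_abs x, _root_.sq_abs y]
  have hr0 : 0 < Real.sqrt (x^2+y^2) := Real.sqrt_pos.mpr (by positivity)
  apply inv_anti₀ (by positivity)
  rw [← mul_assoc]
  calc Real.sqrt 2 * Real.sqrt |x| * Real.sqrt |y| ≤ Real.sqrt (x^2+y^2) := ha ▸ hb
    _ ≤ Real.sqrt (x^2+y^2) * (1 + Real.sqrt (x^2+y^2))^2 := by nlinarith [mul_pos hr0 hr0, mul_nonneg (mul_nonneg hr0.le hr0.le) hr0.le]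

lemma psi_integrable_zero : Integrable (fun z : ℂ => (‖z‖ * (1+‖z‖)^2)⁻¹) := by
  have hmeas : AEStronglyMeasurable (fun z : ℂ => (‖z‖ * (1+‖z‖)^2)⁻¹) volume := by
    apply Measurable.aestronglyMeasurable
    exact (by fun_prop : Measurable fun z : ℂ => (‖z‖ * (1+‖z‖)^2)).inv
  have hsm : MeasurableSet {z : ℂ | ‖z‖ ≤ 1} :=
    measurableSet_le (by fun_prop) measurable_const
  rw [← integrableOn_univ, ← Set.union_compl_self {z : ℂ | ‖z‖ ≤ 1}]
  apply IntegrableOn.union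
  · -- near 0
    apply Integrable.mono' (g := fun z : ℂ => (2:ℝ)^(-(1/2):ℝ) * (Fh z.re * Fh z.im))
      ((intProd.const_mul _).integrableOn) (hmeas.restrict)
    have h0 : ∀ᵐ z : ℂ, z.re ≠ 0 ∧ z.im ≠ 0 := by
      have := null_re; have := null_im
      rw [← compl_mem_ae_iff] at *
      filter_upwards [this, ‹{z : ℂ | z.re = 0}ᶜ ∈ ae volume›] with z h1 h2
      exact ⟨h2, h1⟩
    rw [ae_restrict_iff' hsm]
    filter_upwards [h0] with z hz hzs
    obtain ⟨hre, him⟩ := hz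
    have hnz : ‖z‖ = Real.sqrt (z.re^2 + z.im^2) := by
      rw [Complex.norm_def, Complex.normSq_apply]; ring_nf
    have hF1 : Fh z.re = |z.re| ^ (-(1/2):ℝ) := by
      apply Set.indicator_of_mem
      constructor <;> [linarith [abs_le.mp (le_trans (Complex.abs_re_le_norm z) hzs)|>.1];
        linarith [abs_le.mp (le_trans (Complex.abs_re_le_norm z) hzs)|>.2]]
    have hF2 : Fh z.im = |z.im| ^ (-(1/2):ℝ) := by
      apply Set.indicator_of_mem
      constructor <;> [linarith [abs_le.mp (le_trans (Complex.abs_im_le_norm z) hzs)|>.1];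
        linarith [abs_le.mp (le_trans (Complex.abs_im_le_norm z) hzs)|>.2]]
    rw [Real.norm_eq_abs, _root_.abs_of_nonneg (by positivity), hF1, hF2, hnz]
    exact sqrt_bound hre him
  · -- tail
    have hint : Integrable (fun z : ℂ => 2 * (1+‖z‖) ^ (-(3:ℝ))) := by
      apply Integrable.const_mul
      apply integrable_one_add_norm (E := ℂ)
      rw [Complex.finrank_real_complex]; norm_num
    apply Integrable.mono' (hint.integrableOn) (hmeas.restrict)
    rw [ae_restrict_iff' hsm.compl]
    apply ae_of_all
    intro z hz
    simp only [Set.mem_compl_iff, Set.mem_setOf_eq, not_le] at hz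
    have h1 : (0:ℝ) < ‖z‖ := by linarith
    rw [Real.norm_eq_abs, _root_.abs_of_nonneg (by positivity),
      Real.rpow_neg (by positivity), show (3:ℝ) = ((3:ℕ):ℝ) by norm_num,
      Real.rpow_natCast]
    rw [inv_le_iff_one_le_mul₀ (by positivity)]
    have h9 : (0:ℝ) < (1 + ‖z‖)^3 := by positivity
    rw [show (2:ℝ) * ((1+‖z‖)^3)⁻¹ * (‖z‖ * (1+‖z‖)^2) = (2 * ‖z‖ * (1+‖z‖)^2) / (1+‖z‖)^3 by ring,
      le_div_iff₀ h9]
    nlinarith []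

lemma psi_integrable (c : ℂ) : Integrable (fun z : ℂ => (‖z - c‖ * (1+‖z - c‖)^2)⁻¹) :=
  psi_integrable_zero.comp_sub_right c

lemma key_est {u s : ℂ} (hu : u ≠ 0) (hs : s ≠ 0) :
    |(u⁻¹ * (starRingEnd ℂ) s⁻¹).im| ≤ ‖u - s‖ / (‖u‖ * ‖s‖^2) := by
  have hun : (0:ℝ) < ‖u‖ := norm_pos_iff.mpr hu
  have hsn : (0:ℝ) < ‖s‖ := norm_pos_iff.mpr hs
  have h1 : u⁻¹ * (starRingEnd ℂ) s⁻¹ = (u * (starRingEnd ℂ) s)⁻¹ := by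
    rw [map_inv₀, mul_inv]
  rw [h1, Complex.inv_im]
  have h3 : (u * (starRingEnd ℂ) s).im = -(u * (starRingEnd ℂ) (u - s)).im := by
    have h2 : u * (starRingEnd ℂ) s = (Complex.normSq u : ℂ) - u * (starRingEnd ℂ) (u - s) := by
      rw [map_sub, mul_sub, Complex.mul_conj]; ring
    rw [h2]; simp
  have h4 : |(u * (starRingEnd ℂ) s).im| ≤ ‖u‖ * ‖u - s‖ := by
    rw [h3, abs_neg]
    calc |(u * (starRingEnd ℂ) (u - s)).im| ≤ ‖u * (starRingEnd ℂ) (u - s)‖ :=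
          Complex.abs_im_le_norm _
      _ = ‖u‖ * ‖u - s‖ := by rw [norm_mul, Complex.norm_conj]
  have h5 : Complex.normSq (u * (starRingEnd ℂ) s) = (‖u‖ * ‖s‖)^2 := by
    rw [map_mul, Complex.normSq_conj, Complex.normSq_eq_norm_sq, Complex.normSq_eq_norm_sq]
    ring
  rw [abs_div, abs_neg, _root_.abs_of_nonneg (Complex.normSq_nonneg _), h5]
  rw [div_le_div_iff₀ (by positivity) (by positivity)]
  calc |(u * (starRingEnd ℂ) s).im| * (‖u‖ * ‖s‖^2) ≤ (‖u‖ * ‖u - s‖) * (‖u‖ * ‖s‖^2) := by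
        apply mul_le_mul_of_nonneg_right h4 (by positivity)
    _ = ‖u - s‖ * (‖u‖ * ‖s‖)^2 := by ring

lemma key_est' {u s : ℂ} (hu : u ≠ 0) (hs : s ≠ 0) :
    |(u⁻¹ * (starRingEnd ℂ) s⁻¹).im| ≤ ‖u - s‖ / (‖u‖^2 * ‖s‖) := by
  have h0 : u⁻¹ * (starRingEnd ℂ) s⁻¹ = (starRingEnd ℂ) (s⁻¹ * (starRingEnd ℂ) u⁻¹) := by
    rw [map_mul, Complex.conj_conj]; ring
  rw [h0, Complex.conj_im, abs_neg]
  calc |(s⁻¹ * (starRingEnd ℂ) u⁻¹).im| ≤ ‖s - u‖ / (‖s‖ * ‖u‖^2) := key_est hs hu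
    _ = ‖u - s‖ / (‖u‖^2 * ‖s‖) := by rw [norm_sub_rev u s, mul_comm (‖s‖) (‖u‖^2)]

lemma dom_est_aux {x y D k : ℝ} (hx : 0 < x) (hy : 0 < y) (hD : 0 < D)
    (h3 : D ≤ x + y) (hxy : x ≤ y) (hk1 : k ≤ D / (x * y^2)) :
    k ≤ (D*(2/D+1)^2) * ((x*(1+x)^2)⁻¹ + (y*(1+y)^2)⁻¹) := by
  have hy2 : D ≤ 2*y := by linarith
  have key : 1 + x ≤ (2/D+1)*y := by
    have h1 : 1 ≤ 2*y/D := (one_le_div hD).mpr hy2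
    have h2 : (2/D+1)*y = 2*y/D + y := by ring
    linarith
  have hsq : (1+x)^2 ≤ ((2/D+1)*y)^2 := by
    apply pow_le_pow_left₀ (by positivity) key
  have main : D / (x*y^2) ≤ (D*(2/D+1)^2) / (x*(1+x)^2) := by
    rw [div_le_div_iff₀ (by positivity) (by positivity)]
    have h6 := mul_le_mul_of_nonneg_left hsq (le_of_lt (mul_pos hD hx))
    nlinarith [h6]
  have last : (D*(2/D+1)^2) / (x*(1+x)^2) ≤ (D*(2/D+1)^2) * ((x*(1+x)^2)⁻¹ + (y*(1+y)^2)⁻¹) := by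
    rw [div_eq_mul_inv]
    have h7 : (0:ℝ) ≤ (y*(1+y)^2)⁻¹ := by positivity
    have h8 : (0:ℝ) ≤ D*(2/D+1)^2 := by positivity
    nlinarith [h7, h8]
  linarith

lemma dom_est {x y D k : ℝ} (hx : 0 < x) (hy : 0 < y) (hD : 0 < D)
    (h3 : D ≤ x + y) (hk1 : k ≤ D / (x * y^2)) (hk2 : k ≤ D / (x^2 * y)) :
    k ≤ (D*(2/D+1)^2) * ((x*(1+x)^2)⁻¹ + (y*(1+y)^2)⁻¹) := by
  rcases le_total x y with hxy | hxy
  · exact dom_est_aux hx hy hD h3 hxy hk1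
  · have := dom_est_aux hy hx hD (by linarith) hxy (le_of_le_of_eq hk2 (by ring))
    linarith

lemma core_integrable (a b : ℂ) :
    Integrable (fun z : ℂ => ((z - a)⁻¹ * (starRingEnd ℂ) ((z - b)⁻¹)).im) := by
  rcases eq_or_ne a b with rfl | hab
  · have : (fun z : ℂ => ((z - a)⁻¹ * (starRingEnd ℂ) ((z - a)⁻¹)).im) = fun _ => 0 := by
      funext z
      rw [Complex.mul_conj]
      simp
    rw [this]
    exact integrable_zero _ _ _
  · set D := ‖a - b‖ with hDdef
    have hD : 0 < D := by rw [hDdef]; simp [sub_eq_zero, hab]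
    have hmeas : AEStronglyMeasurable
        (fun z : ℂ => ((z - a)⁻¹ * (starRingEnd ℂ) ((z - b)⁻¹)).im) volume := by
      apply Measurable.aestronglyMeasurable
      apply Complex.measurable_im.comp
      exact ((measurable_id.sub_const a).inv).mul
        (Complex.continuous_conj.measurable.comp ((measurable_id.sub_const b).inv))
    apply Integrable.mono'
      (g := fun z : ℂ => (D*(2/D+1)^2) *
        ((‖z - a‖*(1+‖z - a‖)^2)⁻¹ + (‖z - b‖*(1+‖z - b‖)^2)⁻¹))
      (((psi_integrable a).add (psi_integrable b)).const_mul _) hmeas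
    have hnull : ∀ᵐ z : ℂ, z ≠ a ∧ z ≠ b := by
      have h1 : volume ({a} : Set ℂ) = 0 := measure_singleton a
      have h2 : volume ({b} : Set ℂ) = 0 := measure_singleton b
      rw [show ({a} : Set ℂ) = {z : ℂ | z = a} by rfl, ← compl_mem_ae_iff] at h1
      rw [show ({b} : Set ℂ) = {z : ℂ | z = b} by rfl, ← compl_mem_ae_iff] at h2
      filter_upwards [h1, h2] with z hz1 hz2
      exact ⟨hz1, hz2⟩
    filter_upwards [hnull] with z hz
    obtain ⟨hza, hzb⟩ := hz
    have hu : z - a ≠ 0 := sub_ne_zero.mpr hza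
    have hs : z - b ≠ 0 := sub_ne_zero.mpr hzb
    have hun : (0:ℝ) < ‖z - a‖ := norm_pos_iff.mpr hu
    have hsn : (0:ℝ) < ‖z - b‖ := norm_pos_iff.mpr hs
    have hd2 : (z - a) - (z - b) = b - a := by ring
    have hk1 := key_est hu hs
    have hk2 := key_est' hu hs
    rw [hd2, show ‖b - a‖ = D by rw [hDdef, norm_sub_rev]] at hk1 hk2
    have htri : D ≤ ‖z - a‖ + ‖z - b‖ := by
      calc D = ‖(z - b) - (z - a)‖ := by rw [show (z-b)-(z-a) = -(b-a) by ring, norm_neg,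
            norm_sub_rev]
        _ ≤ ‖z - b‖ + ‖z - a‖ := norm_sub_le _ _
        _ = ‖z - a‖ + ‖z - b‖ := by ring
    exact dom_est hun hsn hD htri hk1 hk2

noncomputable def Sm (P : Multiset ℂ) (z : ℂ) : ℂ := (P.map (fun r => (z - r)⁻¹)).sum

lemma Sm_zero (z : ℂ) : Sm 0 z = 0 := by simp [Sm]

lemma Sm_cons (a : ℂ) (P : Multiset ℂ) (z : ℂ) : Sm (a ::ₘ P) z = (z - a)⁻¹ + Sm P z := by
  simp [Sm]

lemma L1 (a : ℂ) (Q : Multiset ℂ) :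
    Integrable (fun z : ℂ => ((z - a)⁻¹ * (starRingEnd ℂ) (Sm Q z)).im) := by
  induction Q using Multiset.induction_on with
  | empty => simp only [Sm_zero, map_zero, mul_zero, Complex.zero_im]; exact integrable_zero _ _ _
  | cons b Q ih =>
    have : (fun z : ℂ => ((z - a)⁻¹ * (starRingEnd ℂ) (Sm (b ::ₘ Q) z)).im)
        = fun z : ℂ => ((z - a)⁻¹ * (starRingEnd ℂ) ((z - b)⁻¹)).im
            + ((z - a)⁻¹ * (starRingEnd ℂ) (Sm Q z)).im := by
      funext z
      rw [Sm_cons, map_add, mul_add, Complex.add_im]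
    rw [this]
    exact (core_integrable a b).add ih

lemma L2 (P Q : Multiset ℂ) :
    Integrable (fun z : ℂ => (Sm P z * (starRingEnd ℂ) (Sm Q z)).im) := by
  induction P using Multiset.induction_on with
  | empty => simp only [Sm_zero, zero_mul, Complex.zero_im]; exact integrable_zero _ _ _
  | cons a P ih =>
    have : (fun z : ℂ => (Sm (a ::ₘ P) z * (starRingEnd ℂ) (Sm Q z)).im)
        = fun z : ℂ => ((z - a)⁻¹ * (starRingEnd ℂ) (Sm Q z)).im
            + (Sm P z * (starRingEnd ℂ) (Sm Q z)).im := by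
      funext z
      rw [Sm_cons, add_mul, Complex.add_im]
    rw [this]
    exact (L1 a Q).add ih

lemma L3 (M₁ N₁ M₂ N₂ : Multiset ℂ) :
    Integrable (fun z : ℂ =>
      ((Sm M₁ z - Sm N₁ z) * (starRingEnd ℂ) (Sm M₂ z - Sm N₂ z)).im) := by
  have : (fun z : ℂ => ((Sm M₁ z - Sm N₁ z) * (starRingEnd ℂ) (Sm M₂ z - Sm N₂ z)).im)
      = fun z : ℂ => (((Sm M₁ z * (starRingEnd ℂ) (Sm M₂ z)).im
          - (Sm M₁ z * (starRingEnd ℂ) (Sm N₂ z)).im)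
          - (Sm N₁ z * (starRingEnd ℂ) (Sm M₂ z)).im)
          + (Sm N₁ z * (starRingEnd ℂ) (Sm N₂ z)).im := by
    funext z
    rw [map_sub]
    rw [show (Sm M₁ z - Sm N₁ z) * ((starRingEnd ℂ) (Sm M₂ z) - (starRingEnd ℂ) (Sm N₂ z))
      = ((Sm M₁ z * (starRingEnd ℂ) (Sm M₂ z) - Sm M₁ z * (starRingEnd ℂ) (Sm N₂ z))
        - Sm N₁ z * (starRingEnd ℂ) (Sm M₂ z)) + Sm N₁ z * (starRingEnd ℂ) (Sm N₂ z) by ring]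
    rw [Complex.add_im, Complex.sub_im, Complex.sub_im]
  rw [this]
  exact (((L2 M₁ M₂).sub (L2 M₁ N₂)).sub (L2 N₁ M₂)).add (L2 N₁ N₂)

lemma diff_msetprod (M : Multiset ℂ) :
    Differentiable ℂ (fun z : ℂ => (M.map (fun r => z - r)).prod) := by
  induction M using Multiset.induction_on with
  | empty => simp only [Multiset.map_zero, Multiset.prod_zero]; exact differentiable_const 1
  | cons a M ih =>
    have : (fun z : ℂ => ((a ::ₘ M).map (fun r => z - r)).prod)
        = fun z : ℂ => (z - a) * (M.map (fun r => z - r)).prod := by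
      funext z; rw [Multiset.map_cons, Multiset.prod_cons]
    rw [this]
    exact ((differentiable_id.sub_const a)).mul ih

lemma logDeriv_msetprod (c : ℂ) (hc : c ≠ 0) (M : Multiset ℂ) (z : ℂ)
    (hz : ∀ r ∈ M, z - r ≠ 0) :
    logDeriv (fun w : ℂ => c * (M.map (fun r => w - r)).prod) z = Sm M z := by
  induction M using Multiset.induction_on with
  | empty => simp [Sm_zero, logDeriv_const]
  | cons a M ih =>
    have heq : (fun w : ℂ => c * ((a ::ₘ M).map (fun r => w - r)).prod)
        = fun w : ℂ => (w - a) * (c * (M.map (fun r => w - r)).prod) := by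
      funext w; rw [Multiset.map_cons, Multiset.prod_cons]; ring
    rw [heq, Sm_cons]
    have h1 : z - a ≠ 0 := hz a (Multiset.mem_cons_self a M)
    have h2 : c * (M.map (fun r => z - r)).prod ≠ 0 := by
      apply mul_ne_zero hc
      apply Multiset.prod_ne_zero
      intro h0
      obtain ⟨r, hr, hr0⟩ := Multiset.mem_map.mp h0
      exact hz r (Multiset.mem_cons_of_mem hr) hr0
    have hdf : DifferentiableAt ℂ (fun w : ℂ => w - a) z := by fun_prop
    have hdg : DifferentiableAt ℂ (fun w : ℂ => c * (M.map (fun r => w - r)).prod) z :=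
      ((diff_msetprod M).const_mul c) z
    rw [logDeriv_mul z h1 h2 hdf hdg]
    congr 1
    · rw [logDeriv_apply]
      have : deriv (fun w : ℂ => w - a) z = 1 := by
        rw [deriv_sub_const]; exact deriv_id z
      rw [this, one_div]
    · exact ih (fun r hr => hz r (Multiset.mem_cons_of_mem hr))

lemma poly_logDeriv (p : Polynomial ℂ) (hp : p ≠ 0) (z : ℂ) (hz : p.eval z ≠ 0) :
    logDeriv (fun w => p.eval w) z = Sm p.roots z := by
  have hsplit := Polynomial.Splits.eq_prod_roots
    (IsAlgClosed.splits (k := ℂ) p)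
  have heq : (fun w => p.eval w)
      = fun w : ℂ => p.leadingCoeff * (p.roots.map (fun r => w - r)).prod := by
    funext w
    conv_lhs => rw [hsplit]
    rw [Polynomial.eval_mul, Polynomial.eval_C, Polynomial.eval_multiset_prod,
      Multiset.map_map]
    exact congrArg (p.leadingCoeff * ·) (congrArg Multiset.prod
      (Multiset.map_congr rfl (fun r _ => by simp)))
  rw [heq]
  apply logDeriv_msetprod _ (Polynomial.leadingCoeff_ne_zero.mpr hp)
  intro r hr h0
  apply hz
  have : z = r := by rwa [sub_eq_zero] at h0
  rw [this]
  exact Polynomial.isRoot_of_mem_roots hr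

end Aux

/-- the absolute value of the Jacobian determinant of `Log ∘ (f₁, f₂)` is
Lebesgue-integrable over `ℂ`. -/
theorem stmt3 (p₁ q₁ p₂ q₂ : Polynomial ℂ)
    (hp₁ : p₁ ≠ 0) (hq₁ : q₁ ≠ 0) (hp₂ : p₂ ≠ 0) (hq₂ : q₂ ≠ 0)
    (f₁ f₂ : ℂ → ℂ)
    (hf₁ : ∀ z, f₁ z = p₁.eval z / q₁.eval z)
    (hf₂ : ∀ z, f₂ z = p₂.eval z / q₂.eval z) :
    Integrable (fun z : ℂ => ‖Jac f₁ f₂ z‖) := by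
  have hfe₁ : f₁ = fun z => p₁.eval z / q₁.eval z := funext hf₁
  have hfe₂ : f₂ = fun z => p₂.eval z / q₂.eval z := funext hf₂
  set W : ℂ → ℂ := fun z => Sm p₁.roots z - Sm q₁.roots z with hWdef
  set V : ℂ → ℂ := fun z => Sm p₂.roots z - Sm q₂.roots z with hVdef
  have hint : Integrable (fun z : ℂ => (1/2 : ℝ) * |(W z * (starRingEnd ℂ) (V z)).im|) :=
    ((L3 p₁.roots q₁.roots p₂.roots q₂.roots).abs.const_mul _)
  apply hint.congr
  -- a.e. equality
  have hB : ∀ᵐ z : ℂ, p₁.eval z ≠ 0 ∧ q₁.eval z ≠ 0 ∧ p₂.eval z ≠ 0 ∧ q₂.eval z ≠ 0 := by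
    have h1 := (Polynomial.finite_setOf_isRoot hp₁).measure_zero volume
    have h2 := (Polynomial.finite_setOf_isRoot hq₁).measure_zero volume
    have h3 := (Polynomial.finite_setOf_isRoot hp₂).measure_zero volume
    have h4 := (Polynomial.finite_setOf_isRoot hq₂).measure_zero volume
    rw [← compl_mem_ae_iff] at h1 h2 h3 h4
    filter_upwards [h1, h2, h3, h4] with z hz1 hz2 hz3 hz4
    exact ⟨hz1, hz2, hz3, hz4⟩
  filter_upwards [hB] with z hz
  obtain ⟨h1, h2, h3, h4⟩ := hz
  have hW : deriv f₁ z / f₁ z = W z := by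
    have : deriv f₁ z / f₁ z = logDeriv f₁ z := rfl
    rw [this, hfe₁, logDeriv_div z h1 h2 ((p₁.differentiable) z) ((q₁.differentiable) z),
      poly_logDeriv p₁ hp₁ z h1, poly_logDeriv q₁ hq₁ z h2]
  have hV : deriv f₂ z / f₂ z = V z := by
    have : deriv f₂ z / f₂ z = logDeriv f₂ z := rfl
    rw [this, hfe₂, logDeriv_div z h3 h4 ((p₂.differentiable) z) ((q₂.differentiable) z),
      poly_logDeriv p₂ hp₂ z h3, poly_logDeriv q₂ hq₂ z h4]
  set ξ : ℂ := W z * (starRingEnd ℂ) (V z) with hxi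
  have hconj : (starRingEnd ℂ) (deriv f₁ z / f₁ z) * (deriv f₂ z / f₂ z)
      = (starRingEnd ℂ) ξ := by
    rw [hxi, map_mul, Complex.conj_conj, hW, hV]
  have hJac : Jac f₁ f₂ z = (Complex.I/4) * (ξ - (starRingEnd ℂ) ξ) := by
    rw [Jac, hconj, hW, hV]
  rw [hJac, Complex.sub_conj]
  rw [norm_mul, norm_mul, Complex.norm_I, norm_div, Complex.norm_I, Complex.norm_real, Real.norm_eq_abs]
  simp only [mul_one, one_div]
  rw [abs_mul]
  norm_num
  ring
end

section
/- The map Log f for f(z) = (z, z^m − 1) restricted to the open sector U₁ = {z ∈ ℂ* : 0 < arg z < π/|m|} is injective, for any nonzero integer m. -/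
open Complex

/-- auxiliary real lemma: equal norms, equal distances to 1, imaginary parts of the
same strict sign force equality of the two points. -/
lemma stmt7_aux (p q u v : ℝ) (h1 : p * p + q * q = u * u + v * v)
    (h2 : (p - 1) * (p - 1) + (q - 0) * (q - 0) = (u - 1) * (u - 1) + (v - 0) * (v - 0))
    (h3 : 0 < q * v) : p = u ∧ q = v := by
  have hp : p = u := by nlinarith
  refine ⟨hp, ?_⟩
  have h4 : q * q = v * v := by nlinarith
  have h5 : (q - v) * (q + v) = 0 := by linear_combination h4
  rcases mul_eq_zero.mp h5 with h | h
  · linarith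
  · exfalso; nlinarith

/-- the map `Log f` for `f(z) = (z, z^m − 1)` restricted to the open sector
`U₁ = {z ∈ ℂ* : 0 < arg z < π/|m|}` (minus the m-th roots of unity) is injective. -/
theorem stmt7 (m : ℤ) (hm : m ≠ 0) :
    Set.InjOn
      (fun z : ℂ => (Real.log ‖z‖, Real.log ‖z ^ m - 1‖))
      {z : ℂ | z ≠ 0 ∧ 0 < Complex.arg z ∧ Complex.arg z < Real.pi / (|m| : ℝ) ∧
        z ^ m ≠ 1} := by
  rintro z ⟨hz0, hz1, hz2, hz3⟩ w ⟨hw0, hw1, hw2, hw3⟩ heq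
  simp only [Prod.mk.injEq] at heq
  obtain ⟨h1, h2⟩ := heq
  have habsz : 0 < ‖z‖ := norm_pos_iff.mpr hz0
  have habsw : 0 < ‖w‖ := norm_pos_iff.mpr hw0
  have hA : ‖z‖ = ‖w‖ := by
    have := congrArg Real.exp h1
    rwa [Real.exp_log habsz, Real.exp_log habsw] at this
  have hz3' : z ^ m - 1 ≠ 0 := sub_ne_zero.mpr hz3
  have hw3' : w ^ m - 1 ≠ 0 := sub_ne_zero.mpr hw3
  have hB : ‖z ^ m - 1‖ = ‖w ^ m - 1‖ := by
    have := congrArg Real.exp h2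
    rwa [Real.exp_log (norm_pos_iff.mpr hz3'),
      Real.exp_log (norm_pos_iff.mpr hw3')] at this
  set r : ℝ := ‖z‖ with hr
  set θ₁ : ℝ := Complex.arg z with hθ₁
  set θ₂ : ℝ := Complex.arg w with hθ₂
  have hmabs : (0:ℝ) < |(m:ℝ)| := by
    rw [abs_pos]
    exact_mod_cast hm
  have hπ : (0:ℝ) < Real.pi := Real.pi_pos
  -- polar forms
  have hzp : z = (r:ℂ) * Complex.exp ((θ₁:ℂ) * I) := (Complex.norm_mul_exp_arg_mul_I z).symm
  have hwp : w = (r:ℂ) * Complex.exp ((θ₂:ℂ) * I) := by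
    rw [hA]
    exact (Complex.norm_mul_exp_arg_mul_I w).symm
  have hzm : z ^ m = ((r ^ m : ℝ) : ℂ) * Complex.exp (((m * θ₁ : ℝ) : ℂ) * I) := by
    rw [hzp, mul_zpow, ← Complex.exp_int_mul, Complex.ofReal_zpow]
    congr 1
    push_cast
    ring
  have hwm : w ^ m = ((r ^ m : ℝ) : ℂ) * Complex.exp (((m * θ₂ : ℝ) : ℂ) * I) := by
    rw [hwp, mul_zpow, ← Complex.exp_int_mul, Complex.ofReal_zpow]
    congr 1
    push_cast
    ring
  have hs : (0:ℝ) < r ^ m := zpow_pos habsz m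
  -- imaginary parts
  have himz : (z ^ m).im = r ^ m * Real.sin (m * θ₁) := by
    rw [hzm, Complex.mul_im, Complex.ofReal_re, Complex.ofReal_im,
      Complex.exp_ofReal_mul_I_im]
    ring
  have himw : (w ^ m).im = r ^ m * Real.sin (m * θ₂) := by
    rw [hwm, Complex.mul_im, Complex.ofReal_re, Complex.ofReal_im,
      Complex.exp_ofReal_mul_I_im]
    ring
  -- sins have the same strict sign
  have hsinabs : ∀ θ : ℝ, 0 < θ → θ < Real.pi / |(m:ℝ)| →
      0 < Real.sin (|(m:ℝ)| * θ) := by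
    intro θ hθ hθ'
    apply Real.sin_pos_of_pos_of_lt_pi
    · positivity
    · rw [← lt_div_iff₀' hmabs]
      exact hθ'
  have hprod : 0 < Real.sin (m * θ₁) * Real.sin (m * θ₂) := by
    rcases lt_or_gt_of_ne hm with hneg | hpos
    · have hneg' : (m:ℝ) < 0 := by exact_mod_cast hneg
      have e1 : ((m:ℝ)) = -|(m:ℝ)| := by rw [abs_of_neg hneg']; ring
      have s1 := hsinabs θ₁ hz1 hz2
      have s2 := hsinabs θ₂ hw1 hw2
      rw [e1]
      have t1 : -|(m:ℝ)| * θ₁ = -(|(m:ℝ)| * θ₁) := by ring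
      have t2 : -|(m:ℝ)| * θ₂ = -(|(m:ℝ)| * θ₂) := by ring
      rw [t1, t2, Real.sin_neg, Real.sin_neg]
      nlinarith
    · have hpos' : (0:ℝ) < (m:ℝ) := by exact_mod_cast hpos
      have e1 : ((m:ℝ)) = |(m:ℝ)| := (abs_of_pos hpos').symm
      have s1 := hsinabs θ₁ hz1 hz2
      have s2 := hsinabs θ₂ hw1 hw2
      rw [e1]
      nlinarith
  have himprod : 0 < (z ^ m).im * (w ^ m).im := by
    rw [himz, himw]
    have e2 : r ^ m * Real.sin (m * θ₁) * (r ^ m * Real.sin (m * θ₂))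
        = (r ^ m * r ^ m) * (Real.sin (m * θ₁) * Real.sin (m * θ₂)) := by ring
    rw [e2]
    exact mul_pos (mul_pos hs hs) hprod
  -- norms
  have hns : Complex.normSq (z ^ m) = Complex.normSq (w ^ m) := by
    rw [← Complex.sq_norm, ← Complex.sq_norm, Complex.norm_zpow, Complex.norm_zpow, ← hr, hA]
  have hns1 : Complex.normSq (z ^ m - 1) = Complex.normSq (w ^ m - 1) := by
    rw [← Complex.sq_norm, ← Complex.sq_norm, hB]
  rw [Complex.normSq_apply, Complex.normSq_apply] at hns
  rw [Complex.normSq_apply, Complex.normSq_apply, Complex.sub_re, Complex.sub_re,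
    Complex.sub_im, Complex.sub_im, Complex.one_re, Complex.one_im] at hns1
  obtain ⟨hre, him⟩ := stmt7_aux _ _ _ _ hns hns1 himprod
  have hab : z ^ m = w ^ m := Complex.ext hre him
  -- from z^m = w^m deduce equal exponentials
  have hrm0 : ((r ^ m : ℝ) : ℂ) ≠ 0 := by
    exact_mod_cast ne_of_gt hs
  have hexp : Complex.exp (((m * θ₁ : ℝ) : ℂ) * I) = Complex.exp (((m * θ₂ : ℝ) : ℂ) * I) := by
    have h7 := hab
    rw [hzm, hwm] at h7
    exact mul_left_cancel₀ hrm0 h7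
  rw [Complex.exp_eq_exp_iff_exists_int] at hexp
  obtain ⟨n, hn⟩ := hexp
  have hn' : (m : ℝ) * θ₁ = (m : ℝ) * θ₂ + n * (2 * Real.pi) := by
    have := congrArg Complex.im hn
    simpa using this
  -- bound the difference
  have hd : |θ₁ - θ₂| < Real.pi / |(m:ℝ)| := by
    rw [abs_sub_lt_iff]
    constructor <;> linarith
  have hdm : |(m : ℝ) * (θ₁ - θ₂)| < Real.pi := by
    rw [abs_mul]
    calc |(m:ℝ)| * |θ₁ - θ₂| < |(m:ℝ)| * (Real.pi / |(m:ℝ)|) :=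
          mul_lt_mul_of_pos_left hd hmabs
      _ = Real.pi := by field_simp
  have hn0 : n = 0 := by
    have heq2 : (m : ℝ) * (θ₁ - θ₂) = n * (2 * Real.pi) := by linarith [hn']
    rw [heq2, abs_mul, abs_of_pos (by positivity : (0:ℝ) < 2 * Real.pi)] at hdm
    have h7 : |(n:ℝ)| < 1 := by nlinarith [abs_nonneg (n:ℝ)]
    have h8 : |n| < 1 := by exact_mod_cast (by rwa [← Int.cast_abs] at h7 : ((|n| : ℤ) : ℝ) < 1)
    have h9 := abs_lt.mp h8
    omega
  rw [hn0] at hn'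
  have hθ : θ₁ = θ₂ := by
    have hm' : (m : ℝ) ≠ 0 := Int.cast_ne_zero.mpr hm
    have h9 : (m : ℝ) * θ₁ = (m : ℝ) * θ₂ := by
      push_cast at hn'
      linarith
    exact mul_left_cancel₀ hm' h9
  exact Complex.ext_norm_arg hA hθ
end
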